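/- There exist real numbers δ ∈ (0, 1/3) and c₀ > 0 such that for every s ∈ (2/3 − δ, 1] and every t ∈ ℝ, (F_s'(t))² ≤ c₀·G_s'(t), where G_s = F_s·F_s'. -/

import Mathlib

/-- The cutoff function `θ` of Definition 4.3: `θ(t) = (3/8)|t|^{1/2}(|t|² − (10/3)|t| + 5)`
for `|t| ≤ 1` and `θ(t) = 1` for `|t| > 1`. -/
noncomputable def theta (t : ℝ) : ℝ :=
  if |t| ≤ 1 then (3 / 8) * |t| ^ ((1 : ℝ) / 2) * (|t| ^ 2 - (10 / 3) * |t| + 5) else 1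

/-- The auxiliary function `F_s(t) = θ(t)·|t|^s` of Definition 4.3. -/
noncomputable def Fs (s t : ℝ) : ℝ := theta t * |t| ^ s

noncomputable def g1 (s t : ℝ) : ℝ :=
  (3/8)*t^(s+5/2) - (5/4)*t^(s+3/2) + (15/8)*t^(s+1/2)

noncomputable def g1d (s t : ℝ) : ℝ :=
  (3/8)*(s+5/2)*t^(s+3/2) - (5/4)*(s+3/2)*t^(s+1/2) + (15/8)*(s+1/2)*t^(s-1/2)

noncomputable def g1dd (s t : ℝ) : ℝ :=
  (3/8)*(s+5/2)*(s+3/2)*t^(s+1/2) - (5/4)*(s+3/2)*(s+1/2)*t^(s-1/2)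
    + (15/8)*(s+1/2)*(s-1/2)*t^(s-3/2)

lemma Fs_eq_g1 {s t : ℝ} (h0 : 0 < t) (h1 : t ≤ 1) : Fs s t = g1 s t := by
  have ha : |t| = t := abs_of_pos h0
  have e1 : t ^ (s + 1/2 : ℝ) = t ^ ((1:ℝ)/2) * t ^ s := by
    rw [show s + 1/2 = (1:ℝ)/2 + s by ring, Real.rpow_add h0]
  have e2 : t ^ (s + 3/2 : ℝ) = t ^ ((1:ℝ)/2) * t ^ s * t := by
    rw [show s + 3/2 = ((1:ℝ)/2 + s) + 1 by ring, Real.rpow_add h0, Real.rpow_one,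
      Real.rpow_add h0]
  have e3 : t ^ (s + 5/2 : ℝ) = t ^ ((1:ℝ)/2) * t ^ s * t ^ 2 := by
    rw [show s + 5/2 = ((1:ℝ)/2 + s) + (2:ℕ) by push_cast; ring, Real.rpow_add h0,
      Real.rpow_natCast, Real.rpow_add h0]
  simp only [Fs, theta, ha, if_pos h1, g1, e1, e2, e3]
  ring

lemma Fs_eq_rpow {s t : ℝ} (h1 : 1 ≤ t) : Fs s t = t ^ s := by
  have h0 : (0:ℝ) < t := lt_of_lt_of_le one_pos h1
  have ha : |t| = t := abs_of_pos h0
  rcases eq_or_lt_of_le h1 with h | h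
  · simp only [Fs, theta, ha, ← h]
    norm_num
  · simp only [Fs, theta, ha, if_neg (not_le.2 h), one_mul]

lemma hasDerivAt_g1 {t : ℝ} (s : ℝ) (h0 : 0 < t) : HasDerivAt (g1 s) (g1d s t) t := by
  have d1 := Real.hasDerivAt_rpow_const (x := t) (p := s + 5/2) (Or.inl h0.ne')
  have d2 := Real.hasDerivAt_rpow_const (x := t) (p := s + 3/2) (Or.inl h0.ne')
  have d3 := Real.hasDerivAt_rpow_const (x := t) (p := s + 1/2) (Or.inl h0.ne')
  have := ((d1.const_mul (3/8:ℝ)).sub (d2.const_mul (5/4:ℝ))).add (d3.const_mul (15/8:ℝ))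
  refine this.congr_deriv ?_
  rw [show s + 5/2 - 1 = s + 3/2 by ring, show s + 3/2 - 1 = s + 1/2 by ring,
    show s + 1/2 - 1 = s - 1/2 by ring]
  simp only [g1d]; ring

lemma hasDerivAt_g1d {t : ℝ} (s : ℝ) (h0 : 0 < t) : HasDerivAt (g1d s) (g1dd s t) t := by
  have d1 := Real.hasDerivAt_rpow_const (x := t) (p := s + 3/2) (Or.inl h0.ne')
  have d2 := Real.hasDerivAt_rpow_const (x := t) (p := s + 1/2) (Or.inl h0.ne')
  have d3 := Real.hasDerivAt_rpow_const (x := t) (p := s - 1/2) (Or.inl h0.ne')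
  have := ((d1.const_mul ((3/8)*(s+5/2):ℝ)).sub (d2.const_mul ((5/4)*(s+3/2):ℝ))).add
    (d3.const_mul ((15/8)*(s+1/2):ℝ))
  refine this.congr_deriv ?_
  rw [show s + 3/2 - 1 = s + 1/2 by ring, show s + 1/2 - 1 = s - 1/2 by ring,
    show s - 1/2 - 1 = s - 3/2 by ring]
  simp only [g1dd]; ring

lemma hasDerivAt_Fs_mid {s t : ℝ} (h0 : 0 < t) (h1 : t < 1) :
    HasDerivAt (Fs s) (g1d s t) t := by
  refine (hasDerivAt_g1 s h0).congr_of_eventuallyEq ?_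
  have : Set.Ioo (0:ℝ) 1 ∈ nhds t := isOpen_Ioo.mem_nhds ⟨h0, h1⟩
  filter_upwards [this] with u hu
  exact Fs_eq_g1 hu.1 hu.2.le

lemma hasDerivAt_Fs_top {s t : ℝ} (h1 : 1 < t) :
    HasDerivAt (Fs s) (s * t ^ (s - 1)) t := by
  have h0 : (0:ℝ) < t := lt_trans one_pos h1
  refine (Real.hasDerivAt_rpow_const (x := t) (p := s) (Or.inl h0.ne')).congr_of_eventuallyEq ?_
  filter_upwards [isOpen_Ioi.mem_nhds h1] with u hu
  exact Fs_eq_rpow (le_of_lt hu)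

lemma g1_one (s : ℝ) : g1 s 1 = 1 := by simp [g1, Real.one_rpow]; ring
lemma g1d_one (s : ℝ) : g1d s 1 = s := by simp [g1d, Real.one_rpow]; ring
lemma g1dd_one (s : ℝ) : g1dd s 1 = s^2 - s := by simp [g1dd, Real.one_rpow]; ring

lemma hasDerivAt_Fs_one (s : ℝ) : HasDerivAt (Fs s) s 1 := by
  have hleft : HasDerivWithinAt (Fs s) s (Set.Iic 1) 1 := by
    have h := ((hasDerivAt_g1 s one_pos).hasDerivWithinAt (s := Set.Iic 1))
    rw [g1d_one] at h
    refine h.congr_of_eventuallyEq ?_ (by rw [Fs_eq_g1 one_pos le_rfl])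
    filter_upwards [self_mem_nhdsWithin,
      (eventually_gt_nhds one_pos).filter_mono nhdsWithin_le_nhds] with u hu hu'
    exact Fs_eq_g1 hu' hu
  have hright : HasDerivWithinAt (Fs s) s (Set.Ici 1) 1 := by
    have h := (Real.hasDerivAt_rpow_const (x := (1:ℝ)) (p := s)
      (Or.inl one_ne_zero)).hasDerivWithinAt (s := Set.Ici 1)
    rw [Real.one_rpow, mul_one] at h
    exact h.congr (fun u hu => Fs_eq_rpow hu) (Fs_eq_rpow le_rfl)
  have := hleft.union hright
  rwa [Set.Iic_union_Ici, hasDerivWithinAt_univ] at this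

lemma Fs_even (s t : ℝ) : Fs s (-t) = Fs s t := by
  simp [Fs, theta, abs_neg]

lemma deriv_Fs_neg (s t : ℝ) : deriv (Fs s) (-t) = - deriv (Fs s) t := by
  have h1 : (fun u => Fs s (-u)) = Fs s := funext (fun u => Fs_even s u)
  have := deriv_comp_neg (Fs s) t
  rw [h1] at this
  linarith

lemma deriv_G_neg (s t : ℝ) :
    deriv (fun u => Fs s u * deriv (Fs s) u) (-t) = deriv (fun u => Fs s u * deriv (Fs s) u) t := by
  set G := fun u => Fs s u * deriv (Fs s) u with hG
  have hodd : ∀ u, G (-u) = - G u := by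
    intro u; simp only [hG, Fs_even, deriv_Fs_neg]; ring
  have h1 : (fun u => G (-u)) = fun u => -(G u) := funext hodd
  have h2 := deriv_comp_neg G t
  rw [h1] at h2
  rw [deriv.fun_neg] at h2
  linarith

lemma Fs_zero (s : ℝ) (hs : s ≠ 0) : Fs s 0 = 0 := by
  simp [Fs, Real.zero_rpow hs]

lemma Fs_nonneg_le_one {s u : ℝ} (hs : 1/2 < s) (hu : |u| ≤ 1) :
    0 ≤ Fs s u ∧ Fs s u ≤ (15/8) * |u| ^ (s + 1/2 : ℝ) := by
  have hx0 : (0:ℝ) ≤ |u| := abs_nonneg u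
  have hrp : (0:ℝ) ≤ |u| ^ ((1:ℝ)/2) := Real.rpow_nonneg hx0 _
  have hrs : (0:ℝ) ≤ |u| ^ (s:ℝ) := Real.rpow_nonneg hx0 _
  have hfac0 : (0:ℝ) ≤ |u| ^ 2 - (10/3) * |u| + 5 := by nlinarith
  have hfac5 : |u| ^ 2 - (10/3) * |u| + 5 ≤ 5 := by nlinarith
  have hmul : |u| ^ ((1:ℝ)/2) * |u| ^ (s:ℝ) = |u| ^ (s + 1/2 : ℝ) := by
    rcases eq_or_lt_of_le hx0 with h | h
    · rw [← h, Real.zero_rpow (by norm_num : (1:ℝ)/2 ≠ 0),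
        Real.zero_rpow (by intro h; linarith : s + 1/2 ≠ 0), zero_mul]
    · rw [← Real.rpow_add h]; ring_nf
  constructor
  · simp only [Fs, theta, if_pos hu]; positivity
  · simp only [Fs, theta, if_pos hu]
    calc (3/8) * |u| ^ ((1:ℝ)/2) * (|u| ^ 2 - (10/3) * |u| + 5) * |u| ^ (s:ℝ)
        ≤ (3/8) * |u| ^ ((1:ℝ)/2) * 5 * |u| ^ (s:ℝ) := by gcongr
      _ = (15/8) * (|u| ^ ((1:ℝ)/2) * |u| ^ (s:ℝ)) := by ring
      _ = (15/8) * |u| ^ (s + 1/2 : ℝ) := by rw [hmul]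

lemma abs_g1d_le {s t : ℝ} (hs2 : s ≤ 1) (hs1 : 1/2 < s) (h0 : 0 < t) (h1 : t ≤ 1) :
    |g1d s t| ≤ (29/4) * t ^ (s - 1/2 : ℝ) := by
  have hb : ∀ e : ℝ, s - 1/2 ≤ e → t ^ (e : ℝ) ≤ t ^ (s - 1/2 : ℝ) :=
    fun e he => Real.rpow_le_rpow_of_exponent_ge h0 h1 he
  have hp1 : (0:ℝ) ≤ t ^ (s + 3/2 : ℝ) := (Real.rpow_pos_of_pos h0 _).le
  have hp2 : (0:ℝ) ≤ t ^ (s + 1/2 : ℝ) := (Real.rpow_pos_of_pos h0 _).le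
  have hp3 : (0:ℝ) ≤ t ^ (s - 1/2 : ℝ) := (Real.rpow_pos_of_pos h0 _).le
  have h1' := hb (s + 3/2) (by linarith)
  have h2' := hb (s + 1/2) (by linarith)
  have := abs_le.2 (⟨?_, ?_⟩ :
    -( (29/4) * t ^ (s - 1/2 : ℝ)) ≤ g1d s t ∧ g1d s t ≤ (29/4) * t ^ (s - 1/2 : ℝ))
  · exact this
  · simp only [g1d]; nlinarith
  · simp only [g1d]; nlinarith

lemma hasDerivAt_Fs_zero {s : ℝ} (hs1 : 1/2 < s) (hs2 : s ≤ 1) :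
    HasDerivAt (Fs s) 0 0 := by
  rw [hasDerivAt_iff_tendsto_slope]
  have hbound : ∀ᶠ u in nhdsWithin (0:ℝ) {(0:ℝ)}ᶜ, ‖slope (Fs s) 0 u‖ ≤ (15/8) * |u| ^ (s - 1/2 : ℝ) := by
    have hmem : Set.Ioo (-1:ℝ) 1 ∈ nhds (0:ℝ) := isOpen_Ioo.mem_nhds (by norm_num)
    filter_upwards [nhdsWithin_le_nhds hmem, self_mem_nhdsWithin] with u hu hu0
    have hu0' : u ≠ 0 := hu0
    have hau : (0:ℝ) < |u| := abs_pos.2 hu0'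
    have hau1 : |u| ≤ 1 := by rw [abs_le]; constructor <;> [linarith [hu.1]; linarith [hu.2]]
    obtain ⟨hF0, hFle⟩ := Fs_nonneg_le_one hs1 hau1
    rw [slope_def_field, Fs_zero s (by linarith), sub_zero, sub_zero]
    rw [Real.norm_eq_abs, abs_div]
    rw [div_le_iff₀ hau]
    calc |Fs s u| = Fs s u := abs_of_nonneg hF0
      _ ≤ (15/8) * |u| ^ (s + 1/2 : ℝ) := hFle
      _ = (15/8) * |u| ^ (s - 1/2 : ℝ) * |u| := by
          rw [show (s + 1/2 : ℝ) = (s - 1/2) + 1 by ring, Real.rpow_add hau, Real.rpow_one]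
          ring
  have htend : Filter.Tendsto (fun u : ℝ => (15/8) * |u| ^ (s - 1/2 : ℝ))
      (nhdsWithin (0:ℝ) {(0:ℝ)}ᶜ) (nhds 0) := by
    have hc : ContinuousAt (fun x : ℝ => x ^ (s - 1/2 : ℝ)) 0 :=
      Real.continuousAt_rpow_const 0 _ (Or.inr (by linarith))
    have hc' : ContinuousAt (fun x : ℝ => |x| ^ (s - 1/2 : ℝ)) 0 := by
      have : ContinuousAt (fun x : ℝ => x ^ (s - 1/2 : ℝ)) |(0:ℝ)| := by simpa using hc
      exact this.comp continuous_abs.continuousAt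
    have := hc'.tendsto
    simp only [Function.comp, abs_zero, Real.zero_rpow (by intro h; linarith : s - 1/2 ≠ 0)] at this
    have := this.const_mul (15/8 : ℝ)
    rw [mul_zero] at this
    exact this.mono_left nhdsWithin_le_nhds
  exact squeeze_zero_norm' hbound htend
section part4

lemma abs_derivFs_le {s u : ℝ} (hs1 : 1/2 < s) (hs2 : s ≤ 1) (hu0 : u ≠ 0) (hu1 : |u| < 1) :
    |deriv (Fs s) u| ≤ (29/4) * |u| ^ (s - 1/2 : ℝ) := by
  rcases lt_or_gt_of_ne hu0 with h | h
  · have hpos : 0 < -u := by linarith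
    have h1 : -u < 1 := by rw [abs_of_neg h] at hu1; exact hu1
    have := abs_g1d_le hs2 hs1 hpos h1.le
    have hd : deriv (Fs s) u = - deriv (Fs s) (-u) := by
      have := deriv_Fs_neg s (-u); rw [neg_neg] at this; linarith
    rw [hd, abs_neg, (hasDerivAt_Fs_mid hpos h1).deriv, abs_of_neg h]
    exact this
  · have h1 : u < 1 := by rw [abs_of_pos h] at hu1; exact hu1
    rw [(hasDerivAt_Fs_mid h h1).deriv, abs_of_pos h]
    exact abs_g1d_le hs2 hs1 h h1.le

lemma hasDerivAt_G_zero {s : ℝ} (hs1 : 1/2 < s) (hs2 : s ≤ 1) :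
    HasDerivAt (fun u => Fs s u * deriv (Fs s) u) 0 0 := by
  rw [hasDerivAt_iff_tendsto_slope]
  set G := fun u => Fs s u * deriv (Fs s) u with hG
  have hG0 : G 0 = 0 := by
    simp only [hG, Fs_zero s (by linarith : s ≠ 0), zero_mul]
  have hbound : ∀ᶠ u in nhdsWithin (0:ℝ) {(0:ℝ)}ᶜ,
      ‖slope G 0 u‖ ≤ (435/32) * |u| ^ (2*s - 1 : ℝ) := by
    have hmem : Set.Ioo (-1:ℝ) 1 ∈ nhds (0:ℝ) := isOpen_Ioo.mem_nhds (by norm_num)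
    filter_upwards [nhdsWithin_le_nhds hmem, self_mem_nhdsWithin] with u hu hu0
    have hu0' : u ≠ 0 := hu0
    have hau : (0:ℝ) < |u| := abs_pos.2 hu0'
    have hau1 : |u| < 1 := abs_lt.2 ⟨hu.1, hu.2⟩
    obtain ⟨hF0, hFle⟩ := Fs_nonneg_le_one hs1 hau1.le
    have hDle := abs_derivFs_le hs1 hs2 hu0' hau1
    rw [slope_def_field, hG0, sub_zero, sub_zero, Real.norm_eq_abs, abs_div, div_le_iff₀ hau]
    have h1 : |G u| = Fs s u * |deriv (Fs s) u| := by
      rw [hG, abs_mul, abs_of_nonneg hF0]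
    rw [h1]
    calc Fs s u * |deriv (Fs s) u|
        ≤ ((15/8) * |u| ^ (s + 1/2 : ℝ)) * ((29/4) * |u| ^ (s - 1/2 : ℝ)) := by
          apply mul_le_mul hFle hDle (abs_nonneg _) (by positivity)
      _ = (435/32) * (|u| ^ (s + 1/2 : ℝ) * |u| ^ (s - 1/2 : ℝ)) := by ring
      _ = (435/32) * |u| ^ (2*s - 1 : ℝ) * |u| := by
          rw [← Real.rpow_add hau, show (s + 1/2) + (s - 1/2) = (2*s - 1) + 1 by ring,
            Real.rpow_add hau, Real.rpow_one]
          ring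
  have htend : Filter.Tendsto (fun u : ℝ => (435/32) * |u| ^ (2*s - 1 : ℝ))
      (nhdsWithin (0:ℝ) {(0:ℝ)}ᶜ) (nhds 0) := by
    have hc : ContinuousAt (fun x : ℝ => x ^ (2*s - 1 : ℝ)) 0 :=
      Real.continuousAt_rpow_const 0 _ (Or.inr (by linarith))
    have hc' : ContinuousAt (fun x : ℝ => |x| ^ (2*s - 1 : ℝ)) 0 := by
      have : ContinuousAt (fun x : ℝ => x ^ (2*s - 1 : ℝ)) |(0:ℝ)| := by simpa using hc
      exact this.comp continuous_abs.continuousAt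
    have := hc'.tendsto
    simp only [abs_zero, Real.zero_rpow (by intro h; linarith : 2*s - 1 ≠ 0)] at this
    have := this.const_mul (435/32 : ℝ)
    rw [mul_zero] at this
    exact this.mono_left nhdsWithin_le_nhds
  exact squeeze_zero_norm' hbound htend

lemma hasDerivAt_G_mid {s t : ℝ} (h0 : 0 < t) (h1 : t < 1) :
    HasDerivAt (fun u => Fs s u * deriv (Fs s) u)
      (g1d s t * g1d s t + g1 s t * g1dd s t) t := by
  have expl := (hasDerivAt_g1 s h0).mul (hasDerivAt_g1d s h0)
  refine expl.congr_of_eventuallyEq ?_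
  filter_upwards [isOpen_Ioo.mem_nhds (⟨h0, h1⟩ : t ∈ Set.Ioo (0:ℝ) 1)] with u hu
  rw [Fs_eq_g1 hu.1 hu.2.le, (hasDerivAt_Fs_mid hu.1 hu.2).deriv]; rfl

lemma hasDerivAt_G_top {s t : ℝ} (h1 : 1 < t) :
    HasDerivAt (fun u => Fs s u * deriv (Fs s) u)
      ((s * t ^ (s-1:ℝ)) * (s * t ^ (s-1:ℝ)) + t ^ (s:ℝ) * (s * ((s-1) * t ^ (s-2:ℝ)))) t := by
  have h0 : (0:ℝ) < t := lt_trans one_pos h1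
  have d1 := Real.hasDerivAt_rpow_const (x := t) (p := s) (Or.inl h0.ne')
  have d2 := (Real.hasDerivAt_rpow_const (x := t) (p := s - 1) (Or.inl h0.ne')).const_mul s
  have expl := d1.mul d2
  rw [show s - 1 - 1 = s - 2 by ring] at expl
  refine expl.congr_of_eventuallyEq ?_
  filter_upwards [isOpen_Ioi.mem_nhds h1] with u hu
  rw [Fs_eq_rpow (le_of_lt hu), (hasDerivAt_Fs_top hu).deriv]; rfl

lemma hasDerivAt_G_one (s : ℝ) :
    HasDerivAt (fun u => Fs s u * deriv (Fs s) u) (2*s^2 - s) 1 := by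
  have hGg : ∀ u : ℝ, 0 < u → u ≤ 1 → Fs s u * deriv (Fs s) u = g1 s u * g1d s u := by
    intro u hu0 hu1
    rcases eq_or_lt_of_le hu1 with h | h
    · rw [h, Fs_eq_g1 one_pos le_rfl, (hasDerivAt_Fs_one s).deriv, g1d_one]
    · rw [Fs_eq_g1 hu0 hu1, (hasDerivAt_Fs_mid hu0 h).deriv]
  have hleft : HasDerivWithinAt (fun u => Fs s u * deriv (Fs s) u) (2*s^2 - s) (Set.Iic 1) 1 := by
    have expl := ((hasDerivAt_g1 s one_pos).mul (hasDerivAt_g1d s one_pos)).hasDerivWithinAt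
      (s := Set.Iic 1)
    rw [g1_one, g1d_one, g1dd_one] at expl
    have expl' : HasDerivWithinAt (fun u => g1 s u * g1d s u) (2*s^2 - s) (Set.Iic 1) 1 := by
      refine expl.congr_deriv ?_; ring
    refine expl'.congr_of_eventuallyEq ?_ (hGg 1 one_pos le_rfl)
    filter_upwards [self_mem_nhdsWithin,
      (eventually_gt_nhds one_pos).filter_mono nhdsWithin_le_nhds] with u hu hu'
    exact hGg u hu' hu
  have hright : HasDerivWithinAt (fun u => Fs s u * deriv (Fs s) u) (2*s^2 - s) (Set.Ici 1) 1 := by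
    have hGr : ∀ u : ℝ, 1 ≤ u → Fs s u * deriv (Fs s) u = u ^ (s:ℝ) * (s * u ^ (s-1:ℝ)) := by
      intro u hu
      rcases eq_or_lt_of_le hu with h | h
      · rw [← h, Fs_eq_rpow le_rfl, (hasDerivAt_Fs_one s).deriv, Real.one_rpow]; simp
      · rw [Fs_eq_rpow hu, (hasDerivAt_Fs_top h).deriv]
    have d1 := Real.hasDerivAt_rpow_const (x := (1:ℝ)) (p := s) (Or.inl one_ne_zero)
    have d2 := (Real.hasDerivAt_rpow_const (x := (1:ℝ)) (p := s - 1)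
      (Or.inl one_ne_zero)).const_mul s
    have expl := (d1.mul d2).hasDerivWithinAt (s := Set.Ici 1)
    simp only [Real.one_rpow, mul_one] at expl
    have expl' : HasDerivWithinAt (fun u : ℝ => u ^ (s:ℝ) * (s * u ^ (s-1:ℝ)))
        (2*s^2 - s) (Set.Ici 1) 1 := by
      refine expl.congr_deriv ?_; ring
    exact expl'.congr (fun u hu => hGr u hu) (hGr 1 le_rfl)
  have := hleft.union hright
  rwa [Set.Iic_union_Ici, hasDerivWithinAt_univ] at this

end part4
section part5

lemma quartic_nonneg (t : ℝ) :
    (0:ℝ) ≤ 853731/1600 - (358701/200)*t + (8466021/4000)*t^2 - (1070901/1000)*t^3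
      + (9400131/40000)*t^4 := by
  nlinarith [sq_nonneg (t^2 - (114/50)*t + 6/5), sq_nonneg (t - 19/25),
    sq_nonneg (t^2 - (114/50)*t + 1), sq_nonneg (t^2 - (23/10)*t + 13/10), sq_nonneg (t-1),
    sq_nonneg t]

lemma keyIneq (s t : ℝ) (hs1 : 33/50 ≤ s) (hs2 : s ≤ 1) (ht0 : 0 ≤ t) (ht1 : t ≤ 1) :
    ((3/8)*(s+5/2)*t^2 - (5/4)*(s+3/2)*t + (15/8)*(s+1/2))^2 ≤
    100*(((3/8)*(s+5/2)*t^2 - (5/4)*(s+3/2)*t + (15/8)*(s+1/2))^2 +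
      ((3/8)*t^2 - (5/4)*t + 15/8) *
      ((3/8)*(s+5/2)*(s+3/2)*t^2 - (5/4)*(s+3/2)*(s+1/2)*t + (15/8)*(s+1/2)*(s-1/2))) := by
  have hQ : (1:ℝ) ≤ (3/8)*t^2 - (5/4)*t + 15/8 := by
    nlinarith [mul_nonneg (sub_nonneg.2 ht1) (by linarith : (0:ℝ) ≤ 7 - 3*t)]
  have hg := quartic_nonneg t
  have hgam : (0:ℝ) ≤ (3/2)*t^2 - (5/2)*t + 25/24 := by nlinarith [sq_nonneg (t - 5/6)]
  have hbr : (0:ℝ) ≤ 199*((3/8)*t^2 - (5/4)*t + 15/8)^2*(s + 33/50)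
      + 2*((3/8)*t^2 - (5/4)*t + 15/8)*(99*((15/16)*(t-1)^2) + 50*((3/2)*t^2 - (5/2)*t)) := by
    nlinarith [hQ, hgam, sq_nonneg ((3/8)*t^2 - (5/4)*t + 15/8),
      mul_nonneg (by linarith : (0:ℝ) ≤ (3/8)*t^2 - (5/4)*t + 15/8) (sq_nonneg (t-1)),
      mul_le_mul hQ hQ (by norm_num) (by linarith : (0:ℝ) ≤ (3/8)*t^2 - (5/4)*t + 15/8)]
  nlinarith [hg, mul_nonneg (by linarith : (0:ℝ) ≤ s - 33/50) hbr]

/-- the main inequality for `0 < t < 1` -/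
lemma main_mid {s t : ℝ} (hs1 : 33/50 ≤ s) (hs2 : s ≤ 1) (h0 : 0 < t) (h1 : t < 1) :
    (deriv (Fs s) t) ^ 2 ≤ 100 * deriv (fun u => Fs s u * deriv (Fs s) u) t := by
  rw [(hasDerivAt_Fs_mid h0 h1).deriv, (hasDerivAt_G_mid h0 h1).deriv]
  set y := t ^ (s - 1/2 : ℝ) with hy
  have eA : t ^ (s + 1/2 : ℝ) = y * t := by
    rw [hy, show s + 1/2 = (s - 1/2) + 1 by ring, Real.rpow_add h0, Real.rpow_one]
  have eB : t ^ (s + 3/2 : ℝ) = y * t^2 := by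
    rw [hy, show s + 3/2 = (s - 1/2) + ((2:ℕ):ℝ) by push_cast; ring, Real.rpow_add h0,
      Real.rpow_natCast]
  have eC : t ^ (s + 5/2 : ℝ) = y * t^3 := by
    rw [hy, show s + 5/2 = (s - 1/2) + ((3:ℕ):ℝ) by push_cast; ring, Real.rpow_add h0,
      Real.rpow_natCast]
  have eD : t * t ^ (s - 3/2 : ℝ) = y := by
    rw [hy, show s - (1:ℝ)/2 = 1 + (s - 3/2) by ring, Real.rpow_add h0, Real.rpow_one]
  have idF : g1 s t = y * (t * ((3/8)*t^2 - (5/4)*t + 15/8)) := by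
    simp only [g1, eA, eB, eC]; ring
  have idFd : g1d s t = y * ((3/8)*(s+5/2)*t^2 - (5/4)*(s+3/2)*t + (15/8)*(s+1/2)) := by
    simp only [g1d, eA, eB, eC]; ring
  have idFdd : t * g1dd s t =
      y * ((3/8)*(s+5/2)*(s+3/2)*t^2 - (5/4)*(s+3/2)*(s+1/2)*t + (15/8)*(s+1/2)*(s-1/2)) := by
    simp only [g1dd, eA, eB]
    rw [show t * ((3/8)*(s+5/2)*(s+3/2)*(y*t) - (5/4)*(s+3/2)*(s+1/2)*t^(s-1/2:ℝ)
        + (15/8)*(s+1/2)*(s-1/2)*t^(s-3/2:ℝ)) =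
      (3/8)*(s+5/2)*(s+3/2)*(y*t)*t - (5/4)*(s+3/2)*(s+1/2)*t^(s-1/2:ℝ)*t
        + (15/8)*(s+1/2)*(s-1/2)*(t * t^(s-3/2:ℝ)) by ring, eD, ← hy]
    ring
  have hgg : g1 s t * g1dd s t =
      (y * ((3/8)*t^2 - (5/4)*t + 15/8)) *
      (y * ((3/8)*(s+5/2)*(s+3/2)*t^2 - (5/4)*(s+3/2)*(s+1/2)*t + (15/8)*(s+1/2)*(s-1/2))) := by
    have : g1 s t * g1dd s t = (y * ((3/8)*t^2 - (5/4)*t + 15/8)) * (t * g1dd s t) := by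
      rw [idF]; ring
    rw [this, idFdd]
  rw [idFd, hgg]
  have key := keyIneq s t hs1 hs2 h0.le h1.le
  nlinarith [mul_le_mul_of_nonneg_left key (sq_nonneg y)]

end part5
/-- There are `δ ∈ (0, 1/3)` and `c₀ > 0` such that for every `s ∈ (2/3 − δ, 1]` and every
`t ∈ ℝ`, `(F_s'(t))² ≤ c₀ · G_s'(t)`, where `G_s = F_s · F_s'`. -/
theorem stmt_14 :
    ∃ δ c₀ : ℝ, 0 < δ ∧ δ < 1 / 3 ∧ 0 < c₀ ∧
      ∀ s : ℝ, 2 / 3 - δ < s → s ≤ 1 → ∀ t : ℝ,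
        (deriv (Fs s) t) ^ 2 ≤ c₀ * deriv (fun u => Fs s u * deriv (Fs s) u) t := by
  refine ⟨1/150, 100, by norm_num, by norm_num, by norm_num, ?_⟩
  intro s hsl hsu t
  have hs1 : 33/50 ≤ s := by norm_num at hsl ⊢; linarith
  have hs12 : 1/2 < s := by linarith
  -- suffices for nonnegative t
  suffices H : ∀ u : ℝ, 0 ≤ u →
      (deriv (Fs s) u) ^ 2 ≤ 100 * deriv (fun u => Fs s u * deriv (Fs s) u) u by
    rcases le_or_gt 0 t with ht | ht
    · exact H t ht
    · have := H (-t) (by linarith)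
      rw [deriv_Fs_neg, deriv_G_neg, neg_pow] at this
      simpa using this
  intro u hu
  rcases eq_or_lt_of_le hu with h0 | h0
  · rw [← h0, (hasDerivAt_Fs_zero hs12 hsu).deriv, (hasDerivAt_G_zero hs12 hsu).deriv]
    norm_num
  rcases lt_trichotomy u 1 with h1 | h1 | h1
  · exact main_mid hs1 hsu h0 h1
  · rw [h1, (hasDerivAt_Fs_one s).deriv, (hasDerivAt_G_one s).deriv]
    nlinarith
  · rw [(hasDerivAt_Fs_top h1).deriv, (hasDerivAt_G_top h1).deriv]
    have h0' : (0:ℝ) < u := lt_trans one_pos h1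
    have e1 : u ^ (s:ℝ) * u ^ (s-2:ℝ) = u ^ (s-1:ℝ) * u ^ (s-1:ℝ) := by
      rw [← Real.rpow_add h0', ← Real.rpow_add h0']; ring_nf
    have hX : (0:ℝ) ≤ u ^ (s-1:ℝ) * u ^ (s-1:ℝ) :=
      mul_nonneg (Real.rpow_nonneg h0'.le _) (Real.rpow_nonneg h0'.le _)
    have key : s^2 ≤ 100*(s^2 + s*(s-1)) := by nlinarith
    calc (s * u ^ (s-1:ℝ))^2 = s^2 * (u ^ (s-1:ℝ) * u ^ (s-1:ℝ)) := by ring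
      _ ≤ (100*(s^2 + s*(s-1))) * (u ^ (s-1:ℝ) * u ^ (s-1:ℝ)) :=
          mul_le_mul_of_nonneg_right key hX
      _ = 100 * ((s * u ^ (s-1:ℝ)) * (s * u ^ (s-1:ℝ))
            + u ^ (s:ℝ) * (s * ((s-1) * u ^ (s-2:ℝ)))) := by
          rw [show u ^ (s:ℝ) * (s * ((s-1) * u ^ (s-2:ℝ)))
              = s*(s-1) * (u ^ (s:ℝ) * u ^ (s-2:ℝ)) by ring, e1]
          ring
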